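/- Let D = {x^α : α ∈ {0,1}^ℕ} ⊂ Σ_2 be the set of points x^α = M^{α_1}_{a_1} M^0_{a_2} M^{α_2}_{a_3} M^0_{a_4} ... . Then for any triple (x^α, x^β, x^γ) ∈ D³ of points with no two equal, liminf_{k→∞} min{ d(σ^k(x^α),σ^k(x^β)), d(σ^k(x^α),σ^k(x^γ)), d(σ^k(x^β),σ^k(x^γ)) } = 0; in particular the triple fails condition (2) of being 3-scrambled (limsup of the minimum pairwise distance is positive fails after noting that at each position of an odd-indexed block, at least two of the three points carry identical blocks). -/

import Mathlib

open Filter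

/-- Metric on Σ₂ = {0,1}^ℕ : d(u,v) = Σ_{i≥1} δ(u_i,v_i)/2^i (coordinates 0-indexed). -/
noncomputable def dist2 (u v : ℕ → Bool) : ℝ :=
  ∑' i : ℕ, if u i = v i then 0 else (1/2)^(i+1)

/-- The shift map. -/
def shift (u : ℕ → Bool) : ℕ → Bool := fun n => u (n + 1)

/-- Binary complement of a word. -/
def wordCompl (B : List Bool) : List Bool := B.map (fun b => !b)

/-- Morse blocks: M_0 = 0, M_{i+1} = M_i followed by its complement. -/
def morseBlock : ℕ → List Bool
  | 0 => [false]
  | i + 1 => morseBlock i ++ wordCompl (morseBlock i)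

/-- The Morse sequence, the limit of the Morse blocks. -/
def morse : ℕ → Bool := fun n => (morseBlock (n + 1)).getD n false

open Classical in
/-- Infinite concatenation of a sequence of (nonempty) blocks. -/
noncomputable def concatSeq (B : ℕ → List Bool) (k : ℕ) : Bool :=
  if h : ∃ n, ∑ i ∈ Finset.range n, (B i).length ≤ k ∧
      k < ∑ i ∈ Finset.range (n + 1), (B i).length then
    (B h.choose).getD (k - ∑ i ∈ Finset.range h.choose, (B i).length) false
  else false

open Classical in
/-- Lower distributional function. -/
noncomputable def Phi (x y : ℕ → Bool) (δ : ℝ) : ℝ :=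
  liminf (fun m : ℕ =>
    (((Finset.Ioo 0 m).filter (fun k => dist2 (shift^[k] x) (shift^[k] y) < δ)).card : ℝ) / m)
    atTop

open Classical in
/-- Upper distributional function. -/
noncomputable def PhiStar (x y : ℕ → Bool) (ε : ℝ) : ℝ :=
  limsup (fun m : ℕ =>
    (((Finset.Ioo 0 m).filter (fun k => dist2 (shift^[k] x) (shift^[k] y) < ε)).card : ℝ) / m)
    atTop

/-- A Li-Yorke scrambled triple. -/
noncomputable def ScrTriple (x y z : ℕ → Bool) : Prop :=
  x ≠ y ∧ x ≠ z ∧ y ≠ z ∧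
  liminf (fun k : ℕ => max (max (dist2 (shift^[k] x) (shift^[k] y))
      (dist2 (shift^[k] x) (shift^[k] z))) (dist2 (shift^[k] y) (shift^[k] z))) atTop = 0 ∧
  0 < limsup (fun k : ℕ => min (min (dist2 (shift^[k] x) (shift^[k] y))
      (dist2 (shift^[k] x) (shift^[k] z))) (dist2 (shift^[k] y) (shift^[k] z))) atTop

/-- Concatenation of Morse blocks M_{a j}, complemented where `e j = true`. -/
noncomputable def blockPt (a : ℕ → ℕ) (e : ℕ → Bool) : ℕ → Bool :=
  concatSeq (fun j => if e j then wordCompl (morseBlock (a j)) else morseBlock (a j))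

/-- A point occurring as in Theorem 2: odd-position blocks fixed, even-position blocks chosen by α. -/
noncomputable def xpt (a : ℕ → ℕ) (α : ℕ → Bool) : ℕ → Bool :=
  blockPt a (fun j => if j % 2 = 0 then α (j / 2) else false)

/-- Cantor set predicate. -/
def IsCantorSet (C : Set (ℕ → Bool)) : Prop :=
  C.Nonempty ∧ IsCompact C ∧ Perfect C ∧ IsTotallyDisconnected C

/-- The Morse minimal set: orbit closure of the Morse sequence. -/
def morseMinimal : Set (ℕ → Bool) := closure {y | ∃ k : ℕ, y = shift^[k] morse}


/- ========== auxiliary lemmas ========== -/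

lemma shift_iterate (u : ℕ → Bool) (k m : ℕ) : shift^[k] u m = u (m + k) := by
  induction k generalizing u with
  | zero => simp
  | succ k ih =>
      rw [Function.iterate_succ_apply, ih (shift u)]
      show u (m + k + 1) = u (m + (k + 1))
      congr 1

lemma morseBlock_length (i : ℕ) : (morseBlock i).length = 2 ^ i := by
  induction i with
  | zero => simp [morseBlock]
  | succ i ih => simp [morseBlock, wordCompl, ih, pow_succ]; ring

/-- The block sequence used in `blockPt`. -/
noncomputable def myB (a : ℕ → ℕ) (e : ℕ → Bool) : ℕ → List Bool :=
  fun j => if e j then wordCompl (morseBlock (a j)) else morseBlock (a j)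

lemma myB_length (a : ℕ → ℕ) (e : ℕ → Bool) (j : ℕ) : (myB a e j).length = 2 ^ (a j) := by
  unfold myB
  split <;> simp [wordCompl, morseBlock_length]

/-- Cumulative block lengths. -/
def SA (a : ℕ → ℕ) (n : ℕ) : ℕ := ∑ i ∈ Finset.range n, 2 ^ (a i)

lemma Ssum_myB (a : ℕ → ℕ) (e : ℕ → Bool) (n : ℕ) :
    ∑ i ∈ Finset.range n, (myB a e i).length = SA a n := by
  unfold SA
  exact Finset.sum_congr rfl (fun i _ => myB_length a e i)

lemma SA_mono (a : ℕ → ℕ) : Monotone (SA a) := by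
  intro p q hpq
  exact Finset.sum_le_sum_of_subset (Finset.range_subset_range.2 hpq)

lemma SA_le_ge (a : ℕ → ℕ) (n : ℕ) : n ≤ SA a n := by
  calc n = ∑ _i ∈ Finset.range n, 1 := by simp
    _ ≤ SA a n := Finset.sum_le_sum (fun i _ => Nat.one_le_two_pow)

lemma exists_block (a : ℕ → ℕ) (k : ℕ) : ∃ n, SA a n ≤ k ∧ k < SA a (n + 1) := by
  classical
  have hne : ∃ m, k < SA a m := ⟨k + 1, lt_of_lt_of_le (Nat.lt_succ_self k) (SA_le_ge a (k + 1))⟩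
  let m := Nat.find hne
  have hm : k < SA a m := Nat.find_spec hne
  have hm0 : m ≠ 0 := by
    intro h
    have : k < SA a 0 := by rw [← h]; exact hm
    simp [SA] at this
  refine ⟨m - 1, ?_, ?_⟩
  · have := Nat.find_min hne (show m - 1 < m by omega)
    omega
  · have : m - 1 + 1 = m := by omega
    rw [this]; exact hm

lemma concatSeq_apply (B : ℕ → List Bool) (n k : ℕ)
    (h1 : ∑ i ∈ Finset.range n, (B i).length ≤ k)
    (h2 : k < ∑ i ∈ Finset.range (n + 1), (B i).length) :
    concatSeq B k = (B n).getD (k - ∑ i ∈ Finset.range n, (B i).length) false := by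
  classical
  have hex : ∃ m, ∑ i ∈ Finset.range m, (B i).length ≤ k ∧
      k < ∑ i ∈ Finset.range (m + 1), (B i).length := ⟨n, h1, h2⟩
  rw [concatSeq, dif_pos hex]
  obtain ⟨hm1, hm2⟩ := hex.choose_spec
  have hmono : Monotone (fun m => ∑ i ∈ Finset.range m, (B i).length) :=
    fun p q hpq => Finset.sum_le_sum_of_subset (Finset.range_subset_range.2 hpq)
  have hch : hex.choose = n := by
    by_contra hne
    rcases Nat.lt_or_ge hex.choose n with h | h
    · have : ∑ i ∈ Finset.range (hex.choose + 1), (B i).length ≤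
          ∑ i ∈ Finset.range n, (B i).length := hmono (by omega)
      omega
    · have h' : n < hex.choose := by omega
      have : ∑ i ∈ Finset.range (n + 1), (B i).length ≤
          ∑ i ∈ Finset.range hex.choose, (B i).length := hmono (by omega)
      omega
  rw [hch]

lemma blockPt_eq_on (a : ℕ → ℕ) (e e' : ℕ → Bool) (j : ℕ)
    (hj : e j = e' j) (hj1 : e (j + 1) = e' (j + 1)) (k : ℕ)
    (hk1 : SA a j ≤ k) (hk2 : k < SA a (j + 1)) :
    ∀ i < 2 ^ (a (j + 1)), blockPt a e (k + i) = blockPt a e' (k + i) := by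
  intro i hi
  have hBj : myB a e j = myB a e' j := by unfold myB; rw [hj]
  have hBj1 : myB a e (j + 1) = myB a e' (j + 1) := by unfold myB; rw [hj1]
  have hSA2 : SA a (j + 2) = SA a (j + 1) + 2 ^ (a (j + 1)) := by
    unfold SA; rw [Finset.sum_range_succ]
  have hup : k + i < SA a (j + 2) := by omega
  have hxe : blockPt a e = concatSeq (myB a e) := rfl
  have hxe' : blockPt a e' = concatSeq (myB a e') := rfl
  rw [hxe, hxe']
  by_cases h : k + i < SA a (j + 1)
  · rw [concatSeq_apply (myB a e) j (k + i) (by rw [Ssum_myB]; omega)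
        (by rw [Ssum_myB]; exact h),
      concatSeq_apply (myB a e') j (k + i) (by rw [Ssum_myB]; omega)
        (by rw [Ssum_myB]; exact h)]
    rw [hBj, Ssum_myB, Ssum_myB]
  · push_neg at h
    rw [concatSeq_apply (myB a e) (j + 1) (k + i) (by rw [Ssum_myB]; exact h)
        (by rw [Ssum_myB]; exact hup),
      concatSeq_apply (myB a e') (j + 1) (k + i) (by rw [Ssum_myB]; exact h)
        (by rw [Ssum_myB]; exact hup)]
    rw [hBj1, Ssum_myB, Ssum_myB]

lemma dist2_nonneg (u v : ℕ → Bool) : 0 ≤ dist2 u v := by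
  apply tsum_nonneg
  intro i
  split <;> positivity

lemma dist2_le_of_eq_on (u v : ℕ → Bool) (N : ℕ) (h : ∀ i < N, u i = v i) :
    dist2 u v ≤ (1 / 2) ^ N := by
  set f : ℕ → ℝ := fun i => if u i = v i then 0 else (1 / 2) ^ (i + 1) with hf_def
  have hg : Summable (fun i : ℕ => ((1 : ℝ) / 2) ^ (i + 1)) :=
    (summable_nat_add_iff 1).2 summable_geometric_two
  have hfnn : ∀ i, 0 ≤ f i := by
    intro i; simp only [hf_def]; split <;> positivity
  have hfle : ∀ i, f i ≤ ((1 : ℝ) / 2) ^ (i + 1) := by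
    intro i; simp only [hf_def]; split
    · positivity
    · exact le_rfl
  have hf : Summable f := Summable.of_nonneg_of_le hfnn hfle hg
  have hzero : ∀ i < N, f i = 0 := by
    intro i hi; simp only [hf_def]; rw [if_pos (h i hi)]
  have hS0 : ∑ i ∈ Finset.range N, f i = 0 :=
    Finset.sum_eq_zero (fun i hi => hzero i (Finset.mem_range.mp hi))
  have hsplit : ∑ i ∈ Finset.range N, f i + ∑' i, f (i + N) = ∑' i, f i :=
    Summable.sum_add_tsum_nat_add N hf
  have hsum : dist2 u v = ∑' i, f (i + N) := by
    have hd : dist2 u v = ∑' i, f i := rfl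
    rw [hd, ← hsplit, hS0, zero_add]
  rw [hsum]
  have h1 : ∑' i : ℕ, f (i + N) ≤ ∑' i : ℕ, ((1 : ℝ) / 2) ^ (i + N + 1) := by
    apply Summable.tsum_le_tsum
    · intro i; exact hfle (i + N)
    · exact (summable_nat_add_iff (f := f) N).2 hf
    · exact (summable_nat_add_iff
        (f := fun i : ℕ => ((1 : ℝ) / 2) ^ (i + 1)) N).2 hg
  have h2 : ∑' i : ℕ, ((1 : ℝ) / 2) ^ (i + N + 1) = (1 / 2) ^ N := by
    have : ∀ i : ℕ, ((1 : ℝ) / 2) ^ (i + N + 1) = ((1 : ℝ) / 2) ^ i * ((1 / 2) ^ (N + 1)) := by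
      intro i; rw [← pow_add]; ring_nf
    rw [tsum_congr this, tsum_mul_right, tsum_geometric_two]
    rw [pow_succ]
    ring
  calc ∑' i : ℕ, f (i + N) ≤ ∑' i : ℕ, ((1 : ℝ) / 2) ^ (i + N + 1) := h1
    _ = (1 / 2) ^ N := h2

/-- The choice function for the blocks of `xpt`. -/
def ef (α : ℕ → Bool) : ℕ → Bool := fun j => if j % 2 = 0 then α (j / 2) else false

lemma xpt_eq (a : ℕ → ℕ) (α : ℕ → Bool) : xpt a α = blockPt a (ef α) := rfl

lemma pair_exists (α β γ : ℕ → Bool) (j : ℕ) :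
    (ef α j = ef β j ∧ ef α (j + 1) = ef β (j + 1)) ∨
    (ef α j = ef γ j ∧ ef α (j + 1) = ef γ (j + 1)) ∨
    (ef β j = ef γ j ∧ ef β (j + 1) = ef γ (j + 1)) := by
  have pige : ∀ x y z : Bool, x = y ∨ x = z ∨ y = z := by decide
  unfold ef
  by_cases hj : j % 2 = 0
  · have hj1 : ¬ (j + 1) % 2 = 0 := by omega
    simp only [hj, if_true, hj1, if_false]
    rcases pige (α (j / 2)) (β (j / 2)) (γ (j / 2)) with h | h | h
    · exact Or.inl ⟨h, trivial⟩
    · exact Or.inr (Or.inl ⟨h, trivial⟩)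
    · exact Or.inr (Or.inr ⟨h, trivial⟩)
  · have hj1 : (j + 1) % 2 = 0 := by omega
    simp only [hj, if_false, hj1, if_true]
    rcases pige (α ((j + 1) / 2)) (β ((j + 1) / 2)) (γ ((j + 1) / 2)) with h | h | h
    · exact Or.inl ⟨trivial, h⟩
    · exact Or.inr (Or.inl ⟨trivial, h⟩)
    · exact Or.inr (Or.inr ⟨trivial, h⟩)

theorem stmt12 (a : ℕ → ℕ) (α β γ : ℕ → Bool) (hmono : StrictMono a) (hpos : ∀ n, 0 < a n)
    (hratio : Tendsto (fun n => (a n : ℝ) / (a (n + 1) : ℝ)) atTop (nhds 0))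
    (h1 : xpt a α ≠ xpt a β) (h2 : xpt a α ≠ xpt a γ) (h3 : xpt a β ≠ xpt a γ) :
    liminf (fun k : ℕ => min (min (dist2 (shift^[k] (xpt a α)) (shift^[k] (xpt a β)))
        (dist2 (shift^[k] (xpt a α)) (shift^[k] (xpt a γ))))
        (dist2 (shift^[k] (xpt a β)) (shift^[k] (xpt a γ)))) atTop = 0 ∧
    limsup (fun k : ℕ => min (min (dist2 (shift^[k] (xpt a α)) (shift^[k] (xpt a β)))
        (dist2 (shift^[k] (xpt a α)) (shift^[k] (xpt a γ))))
        (dist2 (shift^[k] (xpt a β)) (shift^[k] (xpt a γ)))) atTop = 0 := by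
  set F : ℕ → ℝ := fun k => min (min (dist2 (shift^[k] (xpt a α)) (shift^[k] (xpt a β)))
      (dist2 (shift^[k] (xpt a α)) (shift^[k] (xpt a γ))))
      (dist2 (shift^[k] (xpt a β)) (shift^[k] (xpt a γ))) with hF
  have hFnn : ∀ k, 0 ≤ F k := fun k =>
    le_min (le_min (dist2_nonneg _ _) (dist2_nonneg _ _)) (dist2_nonneg _ _)
  suffices htend : Tendsto F atTop (nhds 0) by
    exact ⟨htend.liminf_eq, htend.limsup_eq⟩
  rw [Metric.tendsto_atTop]
  intro ε hε
  obtain ⟨N, hN⟩ : ∃ N : ℕ, ((1 : ℝ) / 2) ^ N < ε :=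
    exists_pow_lt_of_lt_one hε (by norm_num)
  refine ⟨SA a N, fun k hk => ?_⟩
  obtain ⟨j, hj1, hj2⟩ := exists_block a k
  -- j ≥ N
  have hjN : N ≤ j := by
    by_contra hlt
    push_neg at hlt
    have : SA a (j + 1) ≤ SA a N := SA_mono a (by omega)
    omega
  -- N ≤ 2^(a (j+1))
  have hN2 : N ≤ 2 ^ (a (j + 1)) := by
    have h1 : j + 1 ≤ a (j + 1) := hmono.le_apply
    have h2 : a (j + 1) < 2 ^ (a (j + 1)) := Nat.lt_two_pow_self
    omega
  -- key bound for any pair whose e-functions agree at j and j+1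
  have key : ∀ x y : ℕ → Bool,
      (ef x j = ef y j ∧ ef x (j + 1) = ef y (j + 1)) →
      dist2 (shift^[k] (xpt a x)) (shift^[k] (xpt a y)) ≤ (1 / 2) ^ N := by
    intro x y ⟨hxy1, hxy2⟩
    apply dist2_le_of_eq_on
    intro i hi
    rw [shift_iterate, shift_iterate, xpt_eq, xpt_eq]
    have := blockPt_eq_on a (ef x) (ef y) j hxy1 hxy2 k hj1 hj2 i (by omega)
    rw [Nat.add_comm k i] at this
    exact this
  have hFle : F k ≤ (1 / 2) ^ N := by
    rcases pair_exists α β γ j with h | h | h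
    · exact le_trans (le_trans (min_le_left _ _) (min_le_left _ _)) (key α β h)
    · exact le_trans (le_trans (min_le_left _ _) (min_le_right _ _)) (key α γ h)
    · exact le_trans (min_le_right _ _) (key β γ h)
  rw [Real.dist_eq, sub_zero, abs_of_nonneg (hFnn k)]
  exact lt_of_le_of_lt hFle hN
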